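/- Let G be a graph and let G' be obtained from G by deleting two independent edges u1v1 and u2v2 (with all four vertices distinct) and adding the edges u1u2 and v1v2. If X is the principal eigenvector of Q(G), then q(G') − q(G) ≥ 2(x_{v2} − x_{u1})(x_{v1} − x_{u2}). In particular, if x_{v2} > x_{u1} and x_{v1} > x_{u2}, then q(G') > q(G). -/

import Mathlib

open Matrix SimpleGraph

/-- The signless Laplacian matrix `Q(G) = D(G) + A(G)` of a finite simple graph. -/
noncomputable def signlessLaplacian {V : Type*} [Fintype V] (G : SimpleGraph V) :
    Matrix V V ℝ :=
  letI := Classical.decEq V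
  letI : DecidableRel G.Adj := Classical.decRel _
  Matrix.diagonal (fun v => (G.degree v : ℝ)) + G.adjMatrix ℝ

/-- The `Q`-spectral radius `q(G)`: the largest eigenvalue of `Q(G)`. -/
noncomputable def qspec {V : Type*} [Fintype V] (G : SimpleGraph V) : ℝ :=
  letI := Classical.decEq V
  sSup (spectrum ℝ (signlessLaplacian G))


lemma rayleigh_le {n : Type*} [Fintype n] [DecidableEq n] [Nonempty n]
    {A : Matrix n n ℝ} (hA : A.IsHermitian) (x : n → ℝ) (hx : ∑ i, x i ^ 2 = 1) :
    x ⬝ᵥ A.mulVec x ≤ sSup (spectrum ℝ A) := by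
  set U : Matrix n n ℝ := (hA.eigenvectorUnitary : Matrix n n ℝ) with hU
  set y : n → ℝ := star U *ᵥ x with hy
  have hUU : U * star U = 1 := (Matrix.mem_unitaryGroup_iff).mp hA.eigenvectorUnitary.2
  have hxy : x ᵥ* U = y := by
    rw [hy, Matrix.star_eq_conjTranspose, Matrix.conjTranspose_eq_transpose_of_trivial,
      Matrix.mulVec_transpose]
  have h1 : x ⬝ᵥ A.mulVec x = ∑ i, hA.eigenvalues i * y i ^ 2 := by
    conv_lhs => rw [hA.spectral_theorem, Unitary.conjStarAlgAut_apply]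
    rw [← Matrix.mulVec_mulVec, ← Matrix.mulVec_mulVec, Matrix.dotProduct_mulVec, hxy]
    simp [Matrix.mulVec_diagonal, dotProduct]
    exact Finset.sum_congr rfl fun i _ => by ring
  have h2 : ∑ i, y i ^ 2 = 1 := by
    have : ∑ i, y i ^ 2 = y ⬝ᵥ y := by
      simp [dotProduct, sq]
    rw [this, hy, Matrix.dotProduct_mulVec]
    have : (star U *ᵥ x) ᵥ* star U = x := by
      rw [Matrix.star_eq_conjTranspose, Matrix.conjTranspose_eq_transpose_of_trivial,
        ← Matrix.mulVec_transpose, Matrix.mulVec_mulVec, Matrix.transpose_transpose]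
      have : U * Uᵀ = 1 := by
        rw [← Matrix.conjTranspose_eq_transpose_of_trivial, ← Matrix.star_eq_conjTranspose]
        exact hUU
      rw [this, Matrix.one_mulVec]
    rw [this]
    simpa [dotProduct, sq] using hx
  have hbdd : BddAbove (spectrum ℝ A) := by
    rw [hA.spectrum_real_eq_range_eigenvalues]
    exact (Set.finite_range _).bddAbove
  have hle : ∀ i, hA.eigenvalues i ≤ sSup (spectrum ℝ A) :=
    fun i => le_csSup hbdd (hA.eigenvalues_mem_spectrum_real i)
  calc x ⬝ᵥ A.mulVec x = ∑ i, hA.eigenvalues i * y i ^ 2 := h1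
    _ ≤ ∑ i, sSup (spectrum ℝ A) * y i ^ 2 := by
        apply Finset.sum_le_sum
        intro i _
        exact mul_le_mul_of_nonneg_right (hle i) (sq_nonneg _)
    _ = sSup (spectrum ℝ A) := by rw [← Finset.mul_sum, h2, mul_one]


lemma signlessLaplacian_isHermitian {V : Type*} [Fintype V] (G : SimpleGraph V) :
    (signlessLaplacian G).IsHermitian := by
  classical
  unfold signlessLaplacian
  apply Matrix.IsHermitian.add
  · exact Matrix.isHermitian_diagonal _
  · rw [Matrix.IsHermitian, Matrix.conjTranspose_eq_transpose_of_trivial]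
    exact G.isSymm_adjMatrix

open scoped Classical in
lemma quad_form {V : Type*} [Fintype V] (G : SimpleGraph V) (x : V → ℝ) :
    x ⬝ᵥ (signlessLaplacian G).mulVec x
      = ∑ i, ∑ j, (if G.Adj i j then x i ^ 2 + x i * x j else 0) := by
  classical
  unfold signlessLaplacian
  rw [Matrix.add_mulVec, dotProduct_add]
  have hdeg : ∀ i : V, ((G.degree i : ℝ)) = ∑ j, (if G.Adj i j then (1:ℝ) else 0) := by
    intro i
    rw [SimpleGraph.degree, SimpleGraph.neighborFinset_eq_filter]
    rw [Finset.card_filter]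
    push_cast
    exact Finset.sum_congr rfl fun j _ => by split_ifs <;> simp
  have hsplit : ∀ i : V, ∑ j, (if G.Adj i j then x i ^ 2 + x i * x j else 0)
      = x i ^ 2 * (∑ j, (if G.Adj i j then (1:ℝ) else 0))
        + ∑ j, (if G.Adj i j then x i * x j else 0) := by
    intro i
    rw [Finset.mul_sum, ← Finset.sum_add_distrib]
    exact Finset.sum_congr rfl fun j _ => by split_ifs <;> ring
  have hadj : x ⬝ᵥ (G.adjMatrix ℝ).mulVec x = ∑ i, ∑ j, (if G.Adj i j then x i * x j else 0) := by
    rw [dotProduct]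
    refine Finset.sum_congr rfl fun i _ => ?_
    rw [Matrix.mulVec, dotProduct, Finset.mul_sum]
    refine Finset.sum_congr rfl fun j _ => ?_
    rw [SimpleGraph.adjMatrix_apply]
    split_ifs <;> ring
  have hdiagv : x ⬝ᵥ (Matrix.diagonal (fun v => (G.degree v : ℝ))).mulVec x
      = ∑ i, x i ^ 2 * (G.degree i : ℝ) := by
    rw [dotProduct]
    refine Finset.sum_congr rfl fun i _ => ?_
    rw [Matrix.mulVec_diagonal]
    ring
  rw [hadj, hdiagv, ← Finset.sum_add_distrib]
  refine Finset.sum_congr rfl fun i _ => ?_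
  rw [hsplit i, ← hdeg i]

open scoped Classical in
lemma sum_pair {V : Type*} [Fintype V] (a b : V) (f : V → V → ℝ) :
    ∑ i, ∑ j, (if i = a ∧ j = b then f i j else 0) = f a b := by
  classical
  rw [Finset.sum_eq_single a]
  · rw [Finset.sum_eq_single b] <;> simp_all
  · intro i _ hi
    simp [hi]
  · simp

open scoped Classical in
lemma switch_sum {V : Type*} [Fintype V] (G : SimpleGraph V)
    (u1 v1 u2 v2 : V) (f : V → V → ℝ)
    (he1 : G.Adj u1 v1) (he2 : G.Adj u2 v2)
    (hd1 : u1 ≠ u2) (hd2 : u1 ≠ v2) (hd3 : v1 ≠ u2) (hd4 : v1 ≠ v2)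
    (hn1 : ¬ G.Adj u1 u2) (hn2 : ¬ G.Adj v1 v2) :
    ∑ i, ∑ j, (if (SimpleGraph.fromEdgeSet
        ((G.edgeSet \ {s(u1, v1), s(u2, v2)}) ∪ {s(u1, u2), s(v1, v2)})).Adj i j
        then f i j else 0)
      = ∑ i, ∑ j, (if G.Adj i j then f i j else 0)
        + (f u1 u2 + f u2 u1 + f v1 v2 + f v2 v1)
        - (f u1 v1 + f v1 u1 + f u2 v2 + f v2 u2) := by
  classical
  set G' := SimpleGraph.fromEdgeSet
      ((G.edgeSet \ {s(u1, v1), s(u2, v2)}) ∪ {s(u1, u2), s(v1, v2)}) with hG'def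
  have hu1v1 : u1 ≠ v1 := he1.ne
  have hu2v2 : u2 ≠ v2 := he2.ne
  set R : V → V → Prop := fun i j => s(i, j) = s(u1, v1) ∨ s(i, j) = s(u2, v2) with hRdef
  set Ad : V → V → Prop := fun i j => s(i, j) = s(u1, u2) ∨ s(i, j) = s(v1, v2) with hAdef
  have hRadj : ∀ i j, R i j → G.Adj i j := by
    intro i j h
    rcases h with h | h <;> rw [Sym2.eq_iff] at h <;>
      rcases h with ⟨rfl, rfl⟩ | ⟨rfl, rfl⟩
    · exact he1
    · exact he1.symm
    · exact he2
    · exact he2.symm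
  have hAadj : ∀ i j, Ad i j → ¬ G.Adj i j := by
    intro i j h
    rcases h with h | h <;> rw [Sym2.eq_iff] at h <;>
      rcases h with ⟨rfl, rfl⟩ | ⟨rfl, rfl⟩
    · exact hn1
    · exact fun h => hn1 h.symm
    · exact hn2
    · exact fun h => hn2 h.symm
  have hAne : ∀ i j, Ad i j → i ≠ j := by
    intro i j h
    rcases h with h | h <;> rw [Sym2.eq_iff] at h <;>
      rcases h with ⟨rfl, rfl⟩ | ⟨rfl, rfl⟩
    · exact hd1
    · exact hd1.symm
    · exact hd4
    · exact hd4.symm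
  have hGadj : ∀ i j, G'.Adj i j ↔ ((G.Adj i j ∧ ¬ R i j) ∨ Ad i j) := by
    intro i j
    rw [hG'def, SimpleGraph.fromEdgeSet_adj]
    constructor
    · rintro ⟨hmem, hne⟩
      rcases hmem with ⟨hmem, hnot⟩ | hmem
      · left
        refine ⟨hmem, ?_⟩
        intro hR
        apply hnot
        rcases hR with h | h <;> simp [h]
      · right
        simpa [hAdef, Set.mem_insert_iff] using hmem
    · rintro (⟨hadj, hR⟩ | hA)
      · refine ⟨Or.inl ⟨hadj, ?_⟩, hadj.ne⟩
        intro hmem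
        apply hR
        simpa [hRdef, Set.mem_insert_iff] using hmem
      · refine ⟨Or.inr ?_, hAne i j hA⟩
        simpa [hAdef, Set.mem_insert_iff] using hA
  have hpoint : ∀ i j, (if G'.Adj i j then f i j else 0)
      = (if G.Adj i j then f i j else 0) + (if Ad i j then f i j else 0)
        - (if R i j then f i j else 0) := by
    intro i j
    by_cases hR : R i j
    · have hGa := hRadj i j hR
      have hnAd : ¬ Ad i j := fun h => hAadj i j h hGa
      have hnG' : ¬ G'.Adj i j := by
        rw [hGadj]
        rintro (⟨_, h⟩ | h)
        · exact h hR
        · exact hnAd h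
      rw [if_neg hnG', if_pos hGa, if_neg hnAd, if_pos hR]
      ring
    · by_cases hA : Ad i j
      · have hnG : ¬ G.Adj i j := hAadj i j hA
        have hG' : G'.Adj i j := (hGadj i j).2 (Or.inr hA)
        rw [if_pos hG', if_neg hnG, if_pos hA, if_neg hR]
        ring
      · have : G'.Adj i j ↔ G.Adj i j := by
          rw [hGadj]
          constructor
          · rintro (⟨h, _⟩ | h)
            · exact h
            · exact absurd h hA
          · exact fun h => Or.inl ⟨h, hR⟩
        by_cases hG : G.Adj i j
        · rw [if_pos (this.2 hG), if_pos hG, if_neg hA, if_neg hR]; ring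
        · rw [if_neg (fun h => hG (this.1 h)), if_neg hG, if_neg hA, if_neg hR]; ring
  have hsumR : ∑ i, ∑ j, (if R i j then f i j else 0)
      = f u1 v1 + f v1 u1 + f u2 v2 + f v2 u2 := by
    have hsplit : ∀ i j, (if R i j then f i j else 0)
        = (if i = u1 ∧ j = v1 then f i j else 0) + (if i = v1 ∧ j = u1 then f i j else 0)
          + (if i = u2 ∧ j = v2 then f i j else 0) + (if i = v2 ∧ j = u2 then f i j else 0) := by
      intro i j
      by_cases hR : R i j
      · rw [if_pos hR]
        rcases hR with h | h <;> rw [Sym2.eq_iff] at h <;>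
            rcases h with ⟨rfl, rfl⟩ | ⟨rfl, rfl⟩ <;>
          simp [hu1v1, hd1, hd2, hd3, hd4, hu2v2, hu1v1.symm, hd1.symm, hd2.symm, hd3.symm,
            hd4.symm, hu2v2.symm]
      · rw [if_neg hR]
        have h1 : ¬(i = u1 ∧ j = v1) := fun h => hR (Or.inl (Sym2.eq_iff.mpr (Or.inl h)))
        have h2 : ¬(i = v1 ∧ j = u1) := fun h => hR (Or.inl (Sym2.eq_iff.mpr (Or.inr h)))
        have h3 : ¬(i = u2 ∧ j = v2) := fun h => hR (Or.inr (Sym2.eq_iff.mpr (Or.inl h)))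
        have h4 : ¬(i = v2 ∧ j = u2) := fun h => hR (Or.inr (Sym2.eq_iff.mpr (Or.inr h)))
        rw [if_neg h1, if_neg h2, if_neg h3, if_neg h4]
        ring
    simp only [hsplit]
    simp only [Finset.sum_add_distrib]
    rw [sum_pair, sum_pair, sum_pair, sum_pair]
  have hsumA : ∑ i, ∑ j, (if Ad i j then f i j else 0)
      = f u1 u2 + f u2 u1 + f v1 v2 + f v2 v1 := by
    have hsplit : ∀ i j, (if Ad i j then f i j else 0)
        = (if i = u1 ∧ j = u2 then f i j else 0) + (if i = u2 ∧ j = u1 then f i j else 0)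
          + (if i = v1 ∧ j = v2 then f i j else 0) + (if i = v2 ∧ j = v1 then f i j else 0) := by
      intro i j
      by_cases hA : Ad i j
      · rw [if_pos hA]
        rcases hA with h | h <;> rw [Sym2.eq_iff] at h <;>
            rcases h with ⟨rfl, rfl⟩ | ⟨rfl, rfl⟩ <;>
          simp [hu1v1, hd1, hd2, hd3, hd4, hu2v2, hu1v1.symm, hd1.symm, hd2.symm, hd3.symm,
            hd4.symm, hu2v2.symm]
      · rw [if_neg hA]
        have h1 : ¬(i = u1 ∧ j = u2) := fun h => hA (Or.inl (Sym2.eq_iff.mpr (Or.inl h)))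
        have h2 : ¬(i = u2 ∧ j = u1) := fun h => hA (Or.inl (Sym2.eq_iff.mpr (Or.inr h)))
        have h3 : ¬(i = v1 ∧ j = v2) := fun h => hA (Or.inr (Sym2.eq_iff.mpr (Or.inl h)))
        have h4 : ¬(i = v2 ∧ j = v1) := fun h => hA (Or.inr (Sym2.eq_iff.mpr (Or.inr h)))
        rw [if_neg h1, if_neg h2, if_neg h3, if_neg h4]
        ring
    simp only [hsplit]
    simp only [Finset.sum_add_distrib]
    rw [sum_pair, sum_pair, sum_pair, sum_pair]
  calc ∑ i, ∑ j, (if G'.Adj i j then f i j else 0)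
      = ∑ i, ∑ j, ((if G.Adj i j then f i j else 0) + (if Ad i j then f i j else 0)
          - (if R i j then f i j else 0)) := by
        exact Finset.sum_congr rfl fun i _ => Finset.sum_congr rfl fun j _ => hpoint i j
    _ = _ := by
        simp only [Finset.sum_sub_distrib, Finset.sum_add_distrib, hsumR, hsumA]

/-- The two-edge switching lemma: deleting independent edges `u₁v₁, u₂v₂` and adding
`u₁u₂, v₁v₂` changes the `Q`-spectral radius by at least
`2(x_{v₂} − x_{u₁})(x_{v₁} − x_{u₂})`. -/
theorem qspec_two_edge_switch {V : Type*} [Fintype V] (G : SimpleGraph V)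
    (u1 v1 u2 v2 : V) (X : V → ℝ)
    (hX0 : ∀ v, 0 ≤ X v) (hXunit : ∑ v, X v ^ 2 = 1)
    (hXeig : (signlessLaplacian G).mulVec X = qspec G • X)
    (he1 : G.Adj u1 v1) (he2 : G.Adj u2 v2)
    (hd1 : u1 ≠ u2) (hd2 : u1 ≠ v2) (hd3 : v1 ≠ u2) (hd4 : v1 ≠ v2)
    (hn1 : ¬ G.Adj u1 u2) (hn2 : ¬ G.Adj v1 v2) :
    2 * (X v2 - X u1) * (X v1 - X u2) ≤
      qspec (SimpleGraph.fromEdgeSet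
        ((G.edgeSet \ {s(u1, v1), s(u2, v2)}) ∪ {s(u1, u2), s(v1, v2)})) - qspec G ∧
    (X u1 < X v2 → X u2 < X v1 →
      qspec G < qspec (SimpleGraph.fromEdgeSet
        ((G.edgeSet \ {s(u1, v1), s(u2, v2)}) ∪ {s(u1, u2), s(v1, v2)}))) := by
  classical
  set G' := SimpleGraph.fromEdgeSet
      ((G.edgeSet \ {s(u1, v1), s(u2, v2)}) ∪ {s(u1, u2), s(v1, v2)}) with hG'def
  have hne : Nonempty V := by
    by_contra h
    rw [not_nonempty_iff] at h
    rw [Finset.univ_eq_empty, Finset.sum_empty] at hXunit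
    exact one_ne_zero hXunit.symm
  have hXX : X ⬝ᵥ X = 1 := by
    simpa [dotProduct, sq] using hXunit
  have hq : X ⬝ᵥ (signlessLaplacian G).mulVec X = qspec G := by
    rw [hXeig, dotProduct_smul, hXX]
    simp
  have hray : X ⬝ᵥ (signlessLaplacian G').mulVec X ≤ qspec G' := by
    have := rayleigh_le (signlessLaplacian_isHermitian G') X hXunit
    simpa [qspec] using this
  have hqf := quad_form G X
  have hqf' := quad_form G' X
  have hsw := switch_sum G u1 v1 u2 v2 (fun i j => X i ^ 2 + X i * X j)
    he1 he2 hd1 hd2 hd3 hd4 hn1 hn2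
  have hdiff : X ⬝ᵥ (signlessLaplacian G').mulVec X
      = X ⬝ᵥ (signlessLaplacian G).mulVec X + 2 * (X v2 - X u1) * (X v1 - X u2) := by
    rw [hqf, hqf', ← hG'def] at *
    convert hsw using 1
    · exact Finset.sum_congr rfl fun i _ => Finset.sum_congr rfl fun j _ => by congr
    ring
  have key : 2 * (X v2 - X u1) * (X v1 - X u2) ≤ qspec G' - qspec G := by
    have := hray
    rw [hdiff, hq] at this
    linarith
  refine ⟨key, fun h1 h2 => ?_⟩
  have hpos : 0 < 2 * (X v2 - X u1) * (X v1 - X u2) := by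
    have := mul_pos (sub_pos.mpr h1) (sub_pos.mpr h2)
    nlinarith
  linarith
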